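/- Let f be a finite fully connected ReLU network with L hidden layers, f(x) = Σ_{i_L=1}^{m_L} a^L_{i_L} σ( Σ_{i_{L−1}=1}^{m_{L−1}} a^{L−1}_{i_L i_{L−1}} σ( ⋯ σ( Σ_{i_1=1}^{m_1} a¹_{i_2 i_1} σ( Σ_{i_0=1}^{d+1} a⁰_{i_1 i_0} x_{i_0} ) ) ⋯ ) ) ), where x_{d+1} := 1. Then f ∈ W^L(K) and ‖f‖_{W^L(K)} ≤ Σ_{i_L=1}^{m_L} ⋯ Σ_{i_1=1}^{m_1} Σ_{i_0=1}^{d+1} | a^L_{i_L} a^{L−1}_{i_L i_{L−1}} ⋯ a⁰_{i_1 i_0} | (the path-norm proxy of the weights). -/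

import Mathlib

open MeasureTheory Set Filter Topology
open scoped ENNReal NNReal Classical

noncomputable section

/-- The rectified linear unit. -/
def relu (z : ℝ) : ℝ := max z 0

/-- The Borel σ-algebra on `C(K, ℝ)` for the topology of uniform convergence
(= compact-open topology for compact `K`). -/
instance ctsMeasurableSpace {d : ℕ} (K : Set (Fin d → ℝ)) : MeasurableSpace C(K, ℝ) := borel _

/-- `(μp, μn)` is a (Jordan-decomposed) signed-measure representation of `f` over the
class `H ⊆ C(K, ℝ)`: both parts are finite measures concentrated on `H`, and
`f x = ∫ relu (g x) dμp - ∫ relu (g x) dμn` for every `x ∈ K`. -/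
def IsBarronRep {d : ℕ} (K : Set (Fin d → ℝ)) (H : Set C(K, ℝ)) (f : C(K, ℝ))
    (μp μn : Measure C(K, ℝ)) : Prop :=
  IsFiniteMeasure μp ∧ IsFiniteMeasure μn ∧ μp Hᶜ = 0 ∧ μn Hᶜ = 0 ∧
    ∀ x : K, f x = (∫ g : C(K, ℝ), relu (g x) ∂μp) - ∫ g : C(K, ℝ), relu (g x) ∂μn

/-- The generalized Barron norm `‖f‖_{X,K}`, where `H` plays the role of the closed unit
ball `B^X` (realized inside `C(K,ℝ)`): the infimum of the total variation mass over all
signed-measure representations of `f`. -/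
def barronNorm {d : ℕ} (K : Set (Fin d → ℝ)) (H : Set C(K, ℝ)) (f : C(K, ℝ)) : ℝ≥0∞ :=
  ⨅ p : {p : Measure C(K, ℝ) × Measure C(K, ℝ) // IsBarronRep K H f p.1 p.2},
    p.1.1 Set.univ + p.1.2 Set.univ

/-- The neural tree norm `‖·‖_{W^L(K)}`. For `L = 0` it is the norm `‖w‖_{ℓ¹} + |b|` of the
space of affine functions `x ↦ wᵀx + b`; for `L ≥ 1`, `W^L(K) = B_{W^{L-1}(K), K}` is the
generalized Barron space modelled on `X = W^{L-1}(K)`, whose unit ball is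
`{g : treeNorm K (L-1) g ≤ 1}`.  A continuous function `f` belongs to `W^L(K)` iff
`treeNorm K L f ≠ ∞`. -/
def treeNorm {d : ℕ} (K : Set (Fin d → ℝ)) : ℕ → C(K, ℝ) → ℝ≥0∞
  | 0, f =>
    ⨅ p : {p : (Fin d → ℝ) × ℝ //
        ∀ x : K, f x = (∑ i : Fin d, p.1 i * (x : Fin d → ℝ) i) + p.2},
      ENNReal.ofReal ((∑ i : Fin d, |p.1.1 i|) + |p.1.2|)
  | (L + 1), f => barronNorm K {g : C(K, ℝ) | treeNorm K L g ≤ 1} f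

/-- Hidden unit values of a fully connected ReLU network: `hiddenLayer d m a x ℓ j` is the
output of the `j`-th unit in the `(ℓ+1)`-th hidden layer (of width `m (ℓ+1)`), on input `x`
(with the convention `x_{d+1} = 1` handled by the bias weight `a 0 j d`). -/
def hiddenLayer (d : ℕ) (m : ℕ → ℕ) (a : ℕ → ℕ → ℕ → ℝ) (x : Fin d → ℝ) : ℕ → ℕ → ℝ
  | 0, j => relu ((∑ i : Fin d, a 0 j i.val * x i) + a 0 j d)
  | (ℓ + 1), j => relu (∑ i ∈ Finset.range (m (ℓ + 1)), a (ℓ + 1) j i * hiddenLayer d m a x ℓ i)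

/-- Realization of a finite fully connected ReLU network with `L ≥ 1` hidden layers,
hidden-layer widths `m 1, …, m L`, outer coefficients `c` and weights `a`. -/
def netRealize (d L : ℕ) (m : ℕ → ℕ) (c : ℕ → ℝ) (a : ℕ → ℕ → ℕ → ℝ) (x : Fin d → ℝ) : ℝ :=
  ∑ i ∈ Finset.range (m L), c i * hiddenLayer d m a x (L - 1) i

/-- Sum over all paths below a given hidden unit of the products of absolute weights. -/
def pathBelow (d : ℕ) (m : ℕ → ℕ) (a : ℕ → ℕ → ℕ → ℝ) : ℕ → ℕ → ℝ
  | 0, j => ∑ i ∈ Finset.range (d + 1), |a 0 j i|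
  | (ℓ + 1), j => ∑ i ∈ Finset.range (m (ℓ + 1)), |a (ℓ + 1) j i| * pathBelow d m a ℓ i

/-- The path-norm proxy `Σ_{i_L,…,i_0} |a^L_{i_L} a^{L-1}_{i_L i_{L-1}} ⋯ a⁰_{i_1 i_0}|`
of a finite ReLU network with `L ≥ 1` hidden layers. -/
def pathProxy (d L : ℕ) (m : ℕ → ℕ) (c : ℕ → ℝ) (a : ℕ → ℕ → ℕ → ℝ) : ℝ :=
  ∑ i ∈ Finset.range (m L), |c i| * pathBelow d m a (L - 1) i

end


noncomputable section


lemma relu_nonneg (z : ℝ) : 0 ≤ relu z := le_max_right _ _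
lemma relu_le_abs (z : ℝ) : relu z ≤ |z| := max_le (le_abs_self z) (abs_nonneg z)
lemma relu_zero : relu 0 = 0 := max_self 0
lemma continuous_relu : Continuous relu := continuous_id.max continuous_const
lemma relu_const_mul (c z : ℝ) (hc : 0 ≤ c) : relu (c * z) = c * relu z := by
  unfold relu; rw [mul_max_of_nonneg _ _ hc, mul_zero]

def preact (d : ℕ) (m : ℕ → ℕ) (a : ℕ → ℕ → ℕ → ℝ) : ℕ → ℕ → (Fin d → ℝ) → ℝ
  | 0, j, x => (∑ i : Fin d, a 0 j i.val * x i) + a 0 j d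
  | (ℓ + 1), j, x => ∑ i ∈ Finset.range (m (ℓ + 1)), a (ℓ + 1) j i * relu (preact d m a ℓ i x)

lemma hiddenLayer_eq_relu_preact (d : ℕ) (m : ℕ → ℕ) (a : ℕ → ℕ → ℕ → ℝ) (x : Fin d → ℝ) :
    ∀ ℓ j, hiddenLayer d m a x ℓ j = relu (preact d m a ℓ j x)
  | 0, j => rfl
  | (ℓ + 1), j => by
      rw [hiddenLayer, preact]
      congr 1
      refine Finset.sum_congr rfl fun i _ => ?_
      rw [hiddenLayer_eq_relu_preact d m a x ℓ i]

lemma continuous_preact (d : ℕ) (m : ℕ → ℕ) (a : ℕ → ℕ → ℕ → ℝ) :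
    ∀ ℓ j, Continuous (preact d m a ℓ j)
  | 0, j => by
      simp only [preact]
      exact (continuous_finset_sum _ fun i _ =>
        continuous_const.mul (continuous_apply i)).add continuous_const
  | (ℓ + 1), j => by
      simp only [preact]
      exact continuous_finset_sum _ fun i _ =>
        continuous_const.mul (continuous_relu.comp (continuous_preact d m a ℓ i))

lemma pathBelow_nonneg (d : ℕ) (m : ℕ → ℕ) (a : ℕ → ℕ → ℕ → ℝ) :
    ∀ ℓ j, 0 ≤ pathBelow d m a ℓ j
  | 0, j => by
      rw [pathBelow]; exact Finset.sum_nonneg fun i _ => abs_nonneg _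
  | (ℓ + 1), j => by
      rw [pathBelow]
      exact Finset.sum_nonneg fun i _ =>
        mul_nonneg (abs_nonneg _) (pathBelow_nonneg d m a ℓ i)

lemma abs_preact_le (d : ℕ) (m : ℕ → ℕ) (a : ℕ → ℕ → ℕ → ℝ) (x : Fin d → ℝ) :
    ∀ ℓ j, |preact d m a ℓ j x| ≤ pathBelow d m a ℓ j * ((∑ i : Fin d, |x i|) + 1)
  | 0, j => by
      have hM1 : (1 : ℝ) ≤ (∑ i : Fin d, |x i|) + 1 := by
        have : 0 ≤ ∑ i : Fin d, |x i| := Finset.sum_nonneg fun i _ => abs_nonneg _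
        linarith
      have hMx : ∀ i : Fin d, |x i| ≤ (∑ i : Fin d, |x i|) + 1 := by
        intro i
        have h1 : |x i| ≤ ∑ i : Fin d, |x i| :=
          Finset.single_le_sum (fun i _ => abs_nonneg (x i)) (Finset.mem_univ i)
        linarith
      rw [preact, pathBelow, Finset.sum_range_succ, add_mul, Finset.sum_mul]
      calc |(∑ i : Fin d, a 0 j i.val * x i) + a 0 j d|
          ≤ |∑ i : Fin d, a 0 j i.val * x i| + |a 0 j d| := abs_add_le _ _
        _ ≤ (∑ i : Fin d, |a 0 j i.val * x i|) + |a 0 j d| := by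
            gcongr; exact Finset.abs_sum_le_sum_abs _ _
        _ ≤ (∑ i : Fin d, |a 0 j i.val| * ((∑ i : Fin d, |x i|) + 1))
              + |a 0 j d| * ((∑ i : Fin d, |x i|) + 1) := by
            gcongr with i _
            · rw [abs_mul]
              exact mul_le_mul_of_nonneg_left (hMx i) (abs_nonneg _)
            · nlinarith [abs_nonneg (a 0 j d)]
        _ = (∑ i ∈ Finset.range d, |a 0 j i| * ((∑ i : Fin d, |x i|) + 1))
              + |a 0 j d| * ((∑ i : Fin d, |x i|) + 1) := by
            rw [Finset.sum_range fun i => |a 0 j i| * ((∑ i : Fin d, |x i|) + 1)]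
  | (ℓ + 1), j => by
      have hM0 : (0 : ℝ) ≤ (∑ i : Fin d, |x i|) + 1 := by
        have : 0 ≤ ∑ i : Fin d, |x i| := Finset.sum_nonneg fun i _ => abs_nonneg _
        linarith
      rw [preact, pathBelow, Finset.sum_mul]
      calc |∑ i ∈ Finset.range (m (ℓ + 1)), a (ℓ + 1) j i * relu (preact d m a ℓ i x)|
          ≤ ∑ i ∈ Finset.range (m (ℓ + 1)), |a (ℓ + 1) j i * relu (preact d m a ℓ i x)| :=
            Finset.abs_sum_le_sum_abs _ _
        _ ≤ ∑ i ∈ Finset.range (m (ℓ + 1)),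
              |a (ℓ + 1) j i| * pathBelow d m a ℓ i * ((∑ i : Fin d, |x i|) + 1) := by
            refine Finset.sum_le_sum fun i _ => ?_
            rw [abs_mul, abs_of_nonneg (relu_nonneg _), mul_assoc]
            refine mul_le_mul_of_nonneg_left ?_ (abs_nonneg _)
            exact (relu_le_abs _).trans (abs_preact_le d m a x ℓ i)

lemma treeNorm_zero {d : ℕ} (K : Set (Fin d → ℝ)) : ∀ ℓ, treeNorm K ℓ (0 : C(K, ℝ)) = 0 := by
  intro ℓ
  refine le_antisymm ?_ zero_le
  cases ℓ with
  | zero =>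
      rw [treeNorm]
      refine iInf_le_of_le ⟨(0, 0), fun x => by simp⟩ ?_
      simp
  | succ L =>
      rw [treeNorm]
      refine iInf_le_of_le ⟨(0, 0), ?_⟩ ?_
      · exact ⟨inferInstance, inferInstance, rfl, rfl, fun x => by simp⟩
      · simp


end
noncomputable section

lemma treeNorm_smul_le {d : ℕ} (K : Set (Fin d → ℝ)) (ℓ : ℕ) (g : C(K, ℝ)) (s : ℝ)
    (hs : 0 < s) : treeNorm K ℓ (s • g) ≤ ENNReal.ofReal s * treeNorm K ℓ g := by
  have hs0 : ENNReal.ofReal s ≠ 0 := by simp [hs, ENNReal.ofReal_eq_zero, not_le]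
  cases ℓ with
  | zero =>
      rw [treeNorm, treeNorm, ENNReal.mul_iInf_of_ne hs0 ENNReal.ofReal_ne_top]
      refine le_iInf fun p => ?_
      refine iInf_le_of_le ⟨(s • p.1.1, s * p.1.2), fun x => ?_⟩ ?_
      · have := p.2 x
        simp only [ContinuousMap.smul_apply, smul_eq_mul, this, Pi.smul_apply]
        rw [mul_add, Finset.mul_sum]
        congr 1
        refine Finset.sum_congr rfl fun i _ => by ring
      · rw [← ENNReal.ofReal_mul hs.le]
        refine ENNReal.ofReal_le_ofReal (le_of_eq ?_)
        rw [mul_add, Finset.mul_sum]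
        simp only [Pi.smul_apply, smul_eq_mul, abs_mul, abs_of_pos hs]
  | succ L =>
      rw [treeNorm, treeNorm, barronNorm, barronNorm,
        ENNReal.mul_iInf_of_ne hs0 ENNReal.ofReal_ne_top]
      refine le_iInf fun p => ?_
      obtain ⟨⟨μp, μn⟩, hfin_p, hfin_n, hcp, hcn, hrep⟩ := p
      refine iInf_le_of_le ⟨(ENNReal.ofReal s • μp, ENNReal.ofReal s • μn), ?_⟩ ?_
      · refine ⟨?_, ?_, ?_, ?_, fun x => ?_⟩
        · exact ⟨by rw [Measure.smul_apply, smul_eq_mul]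
                    exact ENNReal.mul_lt_top ENNReal.ofReal_lt_top hfin_p.measure_univ_lt_top⟩
        · exact ⟨by rw [Measure.smul_apply, smul_eq_mul]
                    exact ENNReal.mul_lt_top ENNReal.ofReal_lt_top hfin_n.measure_univ_lt_top⟩
        · rw [Measure.smul_apply, hcp, smul_zero]
        · rw [Measure.smul_apply, hcn, smul_zero]
        · rw [integral_smul_measure, integral_smul_measure,
            ENNReal.toReal_ofReal hs.le]
          simp only [ContinuousMap.smul_apply, smul_eq_mul, hrep x]
          ring
      · simp only [Measure.smul_apply, smul_eq_mul, mul_add]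
        exact le_rfl

end
noncomputable section

lemma ofReal_add_ofReal_neg (z : ℝ) :
    ENNReal.ofReal z + ENNReal.ofReal (-z) = ENNReal.ofReal |z| := by
  rcases le_total 0 z with h | h
  · rw [ENNReal.ofReal_eq_zero.mpr (by linarith : -z ≤ 0), add_zero, abs_of_nonneg h]
  · rw [ENNReal.ofReal_eq_zero.mpr h, zero_add, abs_of_nonpos h]

lemma rep_sum {d : ℕ} (K : Set (Fin d → ℝ)) (hK : IsCompact K) (ℓ n : ℕ)
    (b t : ℕ → ℝ) (g : ℕ → C(K, ℝ)) (ht : ∀ i, 0 ≤ t i)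
    (hg : ∀ i, treeNorm K ℓ (g i) ≤ ENNReal.ofReal (t i))
    (hz : ∀ i, t i = 0 → ∀ x : K, g i x = 0)
    (F : C(K, ℝ)) (hF : ∀ x : K, F x = ∑ i ∈ Finset.range n, b i * relu (g i x)) :
    treeNorm K (ℓ + 1) F ≤ ENNReal.ofReal (∑ i ∈ Finset.range n, |b i| * t i) := by
  haveI : CompactSpace K := isCompact_iff_compactSpace.mp hK
  haveI : BorelSpace C(K, ℝ) := ⟨rfl⟩
  -- normalized dictionary elements
  set g' : ℕ → C(K, ℝ) := fun i => if t i = 0 then 0 else (t i)⁻¹ • g i with hg'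
  have hmem : ∀ i, treeNorm K ℓ (g' i) ≤ 1 := by
    intro i
    by_cases h : t i = 0
    · simp only [hg', h, if_true, treeNorm_zero]; exact zero_le
    · have hti : 0 < t i := lt_of_le_of_ne (ht i) (Ne.symm h)
      simp only [hg', h, if_false]
      calc treeNorm K ℓ ((t i)⁻¹ • g i)
          ≤ ENNReal.ofReal (t i)⁻¹ * treeNorm K ℓ (g i) :=
            treeNorm_smul_le K ℓ (g i) _ (by positivity)
        _ ≤ ENNReal.ofReal (t i)⁻¹ * ENNReal.ofReal (t i) := by gcongr; exact hg i
        _ = 1 := by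
            rw [← ENNReal.ofReal_mul (by positivity), inv_mul_cancel₀ h, ENNReal.ofReal_one]
  have heval : ∀ i (x : K), b i * relu (g i x) = (b i * t i) * relu (g' i x) := by
    intro i x
    by_cases h : t i = 0
    · simp [hg', h, hz i h x, relu_zero]
    · have hti : 0 < t i := lt_of_le_of_ne (ht i) (Ne.symm h)
      simp only [hg', h, if_false, ContinuousMap.smul_apply, smul_eq_mul]
      rw [relu_const_mul _ _ (by positivity)]
      field_simp
  -- the measures
  set μp : Measure C(K, ℝ) :=
    ∑ i ∈ Finset.range n, ENNReal.ofReal (b i * t i) • Measure.dirac (g' i) with hμp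
  set μn : Measure C(K, ℝ) :=
    ∑ i ∈ Finset.range n, ENNReal.ofReal (-(b i * t i)) • Measure.dirac (g' i) with hμn
  have happly : ∀ (c : ℕ → ℝ) (s : Set C(K, ℝ)),
      (∑ i ∈ Finset.range n, ENNReal.ofReal (c i) • Measure.dirac (g' i)) s
        = ∑ i ∈ Finset.range n, ENNReal.ofReal (c i) * (Measure.dirac (g' i)) s := by
    intro c s
    rw [Measure.finset_sum_apply]
    refine Finset.sum_congr rfl fun i _ => by rw [Measure.smul_apply, smul_eq_mul]
  have hfin : ∀ (c : ℕ → ℝ),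
      IsFiniteMeasure (∑ i ∈ Finset.range n, ENNReal.ofReal (c i) • Measure.dirac (g' i)) := by
    intro c
    constructor
    rw [happly]
    refine (ENNReal.sum_lt_top).mpr fun i _ => ?_
    exact ENNReal.mul_lt_top ENNReal.ofReal_lt_top (by simp [Measure.dirac_apply])
  have hconc : ∀ (c : ℕ → ℝ),
      (∑ i ∈ Finset.range n, ENNReal.ofReal (c i) • Measure.dirac (g' i))
        {h : C(K, ℝ) | treeNorm K ℓ h ≤ 1}ᶜ = 0 := by
    intro c
    rw [happly]
    refine Finset.sum_eq_zero fun i _ => ?_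
    rw [Measure.dirac_apply, Set.indicator_of_notMem, mul_zero]
    simp only [Set.mem_compl_iff, Set.mem_setOf_eq, not_not]
    exact hmem i
  have hint : ∀ (c : ℕ → ℝ) (x : K),
      ∫ h : C(K, ℝ), relu (h x) ∂(∑ i ∈ Finset.range n,
          ENNReal.ofReal (c i) • Measure.dirac (g' i))
        = ∑ i ∈ Finset.range n, (ENNReal.ofReal (c i)).toReal * relu (g' i x) := by
    intro c x
    have hcont : Continuous fun h : C(K, ℝ) => relu (h x) :=
      continuous_relu.comp (continuous_eval_const x)
    have hIdirac : ∀ i, Integrable (fun h : C(K, ℝ) => relu (h x)) (Measure.dirac (g' i)) := by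
      intro i
      refine ⟨hcont.aestronglyMeasurable, ?_⟩
      simp only [HasFiniteIntegral, lintegral_dirac]
      exact ENNReal.coe_lt_top
    rw [integral_finset_sum_measure fun i _ =>
      (hIdirac i).smul_measure ENNReal.ofReal_ne_top]
    refine Finset.sum_congr rfl fun i _ => ?_
    rw [integral_smul_measure, integral_dirac, smul_eq_mul]
  have hrep : IsBarronRep K {h : C(K, ℝ) | treeNorm K ℓ h ≤ 1} F μp μn := by
    refine ⟨hfin _, hfin _, hconc _, hconc _, fun x => ?_⟩
    rw [hμp, hμn, hint, hint, hF x, ← Finset.sum_sub_distrib]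
    refine Finset.sum_congr rfl fun i _ => ?_
    rw [heval i x, ← sub_mul]
    congr 1
    rcases le_total 0 (b i * t i) with h | h
    · rw [ENNReal.toReal_ofReal h, ENNReal.ofReal_eq_zero.mpr (by linarith),
        ENNReal.toReal_zero, sub_zero]
    · rw [ENNReal.ofReal_eq_zero.mpr h, ENNReal.toReal_zero, zero_sub,
        ENNReal.toReal_ofReal (by linarith), neg_neg]
  rw [treeNorm, barronNorm]
  refine iInf_le_of_le ⟨(μp, μn), hrep⟩ (le_of_eq ?_)
  show μp Set.univ + μn Set.univ = _
  rw [hμp, hμn, happly, happly, ← Finset.sum_add_distrib,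
    ENNReal.ofReal_sum_of_nonneg fun i _ => mul_nonneg (abs_nonneg _) (ht i)]
  refine Finset.sum_congr rfl fun i _ => ?_
  rw [Measure.dirac_apply, Set.indicator_of_mem (Set.mem_univ _), Pi.one_apply,
    mul_one, mul_one, ofReal_add_ofReal_neg, abs_mul, abs_of_nonneg (ht i)]

end
noncomputable section

def preactC {d : ℕ} (K : Set (Fin d → ℝ)) (m : ℕ → ℕ) (a : ℕ → ℕ → ℕ → ℝ)
    (ℓ j : ℕ) : C(K, ℝ) :=
  ⟨fun x => preact d m a ℓ j x, (continuous_preact d m a ℓ j).comp continuous_subtype_val⟩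

lemma preactC_eq_zero_of_pathBelow_eq_zero {d : ℕ} (K : Set (Fin d → ℝ)) (m : ℕ → ℕ)
    (a : ℕ → ℕ → ℕ → ℝ) (ℓ i : ℕ) (h : pathBelow d m a ℓ i = 0) (x : K) :
    (preactC K m a ℓ i) x = 0 := by
  have hb := abs_preact_le d m a (x : Fin d → ℝ) ℓ i
  rw [h, zero_mul] at hb
  exact abs_nonpos_iff.mp hb

lemma treeNorm_preactC_le {d : ℕ} (K : Set (Fin d → ℝ)) (hK : IsCompact K)
    (m : ℕ → ℕ) (a : ℕ → ℕ → ℕ → ℝ) :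
    ∀ ℓ j, treeNorm K ℓ (preactC K m a ℓ j) ≤ ENNReal.ofReal (pathBelow d m a ℓ j)
  | 0, j => by
      rw [treeNorm]
      refine iInf_le_of_le ⟨(fun i => a 0 j i.val, a 0 j d), fun x => rfl⟩ ?_
      refine ENNReal.ofReal_le_ofReal (le_of_eq ?_)
      rw [pathBelow, Finset.sum_range_succ, Fin.sum_univ_eq_sum_range (fun i => |a 0 j i|)]
  | (ℓ + 1), j => by
      have h := rep_sum K hK ℓ (m (ℓ + 1)) (a (ℓ + 1) j) (pathBelow d m a ℓ)
        (preactC K m a ℓ) (pathBelow_nonneg d m a ℓ)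
        (fun i => treeNorm_preactC_le K hK m a ℓ i)
        (fun i hi x => preactC_eq_zero_of_pathBelow_eq_zero K m a ℓ i hi x)
        (preactC K m a (ℓ + 1) j) (fun x => rfl)
      rwa [pathBelow]

end


/-- Every finite fully connected ReLU network `f` with `L ≥ 1` hidden
layers belongs to the neural tree space `W^L(K)` and its norm is bounded by the
path-norm proxy `Σ_{i_L,…,i_0} |a^L_{i_L} a^{L-1}_{i_L i_{L-1}} ⋯ a⁰_{i_1 i_0}|`. -/
theorem finite_network_mem_treeSpace {d : ℕ} (K : Set (Fin d → ℝ)) (hK : IsCompact K)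
    (L : ℕ) (hL : 1 ≤ L) (m : ℕ → ℕ) (c : ℕ → ℝ) (a : ℕ → ℕ → ℕ → ℝ) :
    ∃ F : C(K, ℝ), (∀ x : K, F x = netRealize d L m c a (x : Fin d → ℝ)) ∧
      treeNorm K L F ≤ ENNReal.ofReal (pathProxy d L m c a) := by
  obtain ⟨L', rfl⟩ : ∃ L', L = L' + 1 := ⟨L - 1, (Nat.succ_pred_eq_of_pos hL).symm⟩
  have hcont : Continuous fun x : K => netRealize d (L' + 1) m c a (x : Fin d → ℝ) := by
    simp only [netRealize, hiddenLayer_eq_relu_preact]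
    exact continuous_finset_sum _ fun i _ =>
      continuous_const.mul (continuous_relu.comp
        ((continuous_preact d m a _ i).comp continuous_subtype_val))
  refine ⟨⟨fun x => netRealize d (L' + 1) m c a (x : Fin d → ℝ), hcont⟩, fun x => rfl, ?_⟩
  have h := rep_sum K hK L' (m (L' + 1)) c (pathBelow d m a L') (preactC K m a L')
    (pathBelow_nonneg d m a L') (fun i => treeNorm_preactC_le K hK m a L' i)
    (fun i hi x => preactC_eq_zero_of_pathBelow_eq_zero K m a L' i hi x)
    ⟨fun x => netRealize d (L' + 1) m c a (x : Fin d → ℝ), hcont⟩ ?_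
  · rwa [pathProxy, Nat.add_sub_cancel]
  · intro x
    show netRealize d (L' + 1) m c a (x : Fin d → ℝ) = _
    rw [netRealize, Nat.add_sub_cancel]
    exact Finset.sum_congr rfl fun i _ => by
      rw [hiddenLayer_eq_relu_preact]; rfl
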